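/- Let H be a complex inner product space, T a unitary operator on H, U a unitary operator on H, F a linear operator on H, θ a real number, and λ a complex number. Suppose that T ∘ U = exp(iθ) · (U ∘ T), that T ∘ F = F ∘ T, and that ψ ∈ H satisfies Tψ = λψ with ψ ≠ 0. If exp(iθ) ≠ 1, then ⟪ψ, U⁻¹(Fψ)⟫ = 0, i.e. the state U⁻¹Fψ is orthogonal to ψ. -/

import Mathlib

/-- Momentum counting: if `T` is unitary with `T ∘ U = exp(iθ)·(U ∘ T)` for a unitary `U`,
`T` commutes with a linear operator `F`, and `ψ ≠ 0` is a `T`-eigenstate, then whenever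
`exp(iθ) ≠ 1`, the state `U⁻¹(Fψ)` is orthogonal to `ψ`. -/
theorem flux_insertion_orthogonality
    {H : Type*} [NormedAddCommGroup H] [InnerProductSpace ℂ H]
    (T U : H ≃ₗᵢ[ℂ] H) (F : H →ₗ[ℂ] H) (θ : ℝ) (lam : ℂ)
    (hTU : ∀ x : H, T (U x) = Complex.exp (Complex.I * (θ : ℂ)) • U (T x))
    (hTF : ∀ x : H, T (F x) = F (T x))
    (ψ : H) (hψ : ψ ≠ 0) (hTψ : T ψ = lam • ψ)
    (hθ : Complex.exp (Complex.I * (θ : ℂ)) ≠ 1) :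
    (inner ℂ ψ (U.symm (F ψ)) : ℂ) = 0 := by
  set e : ℂ := Complex.exp (Complex.I * (θ : ℂ)) with he
  have he0 : e ≠ 0 := Complex.exp_ne_zero _
  set φ : H := U.symm (F ψ) with hφ
  -- F ψ is an eigenvector of T with eigenvalue lam
  have hFψ : T (F ψ) = lam • F ψ := by
    rw [hTF, hTψ, map_smul]
  -- φ is an eigenvector with eigenvalue e⁻¹ * lam
  have hTφ : T φ = (e⁻¹ * lam) • φ := by
    have h1 : T (U φ) = e • U (T φ) := hTU φ
    have h2 : U φ = F ψ := U.apply_symm_apply (F ψ)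
    rw [h2, hFψ] at h1
    have h3 : U (T φ) = (e⁻¹ * lam) • U φ := by
      rw [h2]
      have h4 : e⁻¹ • (lam • F ψ) = e⁻¹ • (e • U (T φ)) := by rw [h1]
      rw [smul_smul, smul_smul, inv_mul_cancel₀ he0, one_smul] at h4
      exact h4.symm
    calc T φ = U.symm (U (T φ)) := (U.symm_apply_apply _).symm
      _ = U.symm ((e⁻¹ * lam) • U φ) := by rw [h3]
      _ = (e⁻¹ * lam) • φ := by rw [map_smul, U.symm_apply_apply]
  -- |lam| = 1
  have hlam : starRingEnd ℂ lam * lam = 1 := by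
    have h := T.inner_map_map ψ ψ
    rw [hTψ, inner_smul_left, inner_smul_right] at h
    have hψψ : (inner ℂ ψ ψ : ℂ) ≠ 0 := by
      simpa [inner_self_eq_zero] using hψ
    rw [← mul_assoc] at h
    nth_rewrite 2 [← one_mul (inner ℂ ψ ψ : ℂ)] at h
    exact mul_right_cancel₀ hψψ h
  -- unitarity on the pair (ψ, φ)
  have key := T.inner_map_map ψ φ
  rw [hTψ, hTφ, inner_smul_left, inner_smul_right] at key
  by_contra hne
  have hmul : starRingEnd ℂ lam * (e⁻¹ * lam) = 1 := by
    rw [← mul_assoc] at key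
    nth_rewrite 2 [← one_mul (inner ℂ ψ φ : ℂ)] at key
    have := mul_right_cancel₀ hne key
    linear_combination this
  have heinv : e⁻¹ = 1 := by
    calc e⁻¹ = e⁻¹ * (starRingEnd ℂ lam * lam) := by rw [hlam, mul_one]
      _ = starRingEnd ℂ lam * (e⁻¹ * lam) := by ring
      _ = 1 := hmul
  exact hθ (by rw [he] at *; exact inv_eq_one.mp heinv)
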